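/- arXiv:2605.30496 — 2 statements merged into one kernel-verified Lean document; each statement's English description precedes it below -/
import Mathlib

section
/- Let n be a positive integer and y an integer with 0 ≤ y ≤ n. Then the posterior expectation of p₂ given Y = y satisfies E(p₂ | y) = [∫₀¹∫₀¹ p₂ (p₁p₂)^y (1-p₁p₂)^{n-y} dp₁ dp₂] / [∫₀¹∫₀¹ (p₁p₂)^y (1-p₁p₂)^{n-y} dp₁ dp₂] = (n-y+1) / ((n+2)(H_{n+1} - H_y)), where H_m is the m-th harmonic number (H₀ = 0). Equivalently, E(p₂|y) = μ_H{y+1, y+2, ..., n+1}/(n+2), where μ_H{a₁,...,a_N} = (N^{-1} Σ_{i=1}^N a_i^{-1})^{-1} is the harmonic mean. -/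
/-- `H m` is the `m`-th harmonic number, with `H 0 = 0`. -/
noncomputable def H (m : ℕ) : ℝ := ∑ j ∈ Finset.range m, 1 / ((j : ℝ) + 1)

/-- The harmonic mean of a finite family of positive reals. -/
noncomputable def harmonicMean (s : Finset ℕ) (f : ℕ → ℝ) : ℝ :=
  (((s.card : ℝ))⁻¹ * ∑ i ∈ s, (f i)⁻¹)⁻¹

open Finset

noncomputable def T (y m : ℕ) : ℝ := (y.factorial * m.factorial : ℝ) / (y + m + 1).factorial

lemma T_pos (y m : ℕ) : 0 < T y m := by
  unfold T
  positivity

lemma T_zero (y : ℕ) : T y 0 = 1 / (y + 1) := by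
  unfold T
  rw [show y + 0 + 1 = y + 1 from rfl, Nat.factorial_succ]
  push_cast
  rw [Nat.factorial]
  push_cast
  field_simp

lemma T_succ_right (y m : ℕ) : T y (m+1) = T y m * (m+1) / (y+m+2) := by
  unfold T
  rw [show y + (m+1) + 1 = (y+m+1) + 1 from by ring, Nat.factorial_succ, Nat.factorial_succ]
  have h1 : ((y+m+1).factorial : ℝ) ≠ 0 := by positivity
  push_cast
  field_simp
  ring

lemma T_succ_left (y m : ℕ) : T (y+1) m = T y m * (y+1) / (y+m+2) := by
  unfold T
  rw [show y + 1 + m + 1 = (y+m+1) + 1 from by ring, Nat.factorial_succ, Nat.factorial_succ]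
  have h1 : ((y+m+1).factorial : ℝ) ≠ 0 := by positivity
  push_cast
  field_simp
  ring

lemma T_sub (y m : ℕ) : T y m - T (y+1) m = T y (m+1) := by
  rw [T_succ_left, T_succ_right]
  have h : ((y:ℝ)+m+2) ≠ 0 := by positivity
  field_simp
  ring

lemma H_succ (k : ℕ) : H (k+1) = H k + 1/(k+1) := by
  unfold H
  rw [Finset.sum_range_succ]

lemma pascal_sum (f : ℕ → ℝ) (m y : ℕ) :
    ∑ k ∈ range (m+2), (-1:ℝ)^k * ((m+1).choose k) * f (y+k)
    = ∑ k ∈ range (m+1), (-1:ℝ)^k * (m.choose k) * f (y+k)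
      - ∑ k ∈ range (m+1), (-1:ℝ)^k * (m.choose k) * f (y+1+k) := by
  rw [Finset.sum_range_succ' (fun k => (-1:ℝ)^k * ((m+1).choose k) * f (y+k)) (m+1)]
  rw [Finset.sum_range_succ' (fun k => (-1:ℝ)^k * (m.choose k) * f (y+k)) m]
  have hcs : ∀ j, ((m+1).choose (j+1) : ℝ) = m.choose j + m.choose (j+1) := by
    intro j; exact_mod_cast congrArg Nat.cast (Nat.choose_succ_succ m j)
  have split : ∑ j ∈ range (m+1), (-1:ℝ)^(j+1) * ((m+1).choose (j+1)) * f (y+(j+1))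
      = ∑ j ∈ range (m+1), (-1:ℝ)^(j+1) * (m.choose j) * f (y+(j+1))
        + ∑ j ∈ range (m+1), (-1:ℝ)^(j+1) * (m.choose (j+1)) * f (y+(j+1)) := by
    rw [← Finset.sum_add_distrib]
    refine Finset.sum_congr rfl fun j hj => ?_
    rw [hcs j]; ring
  rw [split]
  have h2 : ∑ j ∈ range (m+1), (-1:ℝ)^(j+1) * (m.choose (j+1)) * f (y+(j+1))
      = ∑ j ∈ range m, (-1:ℝ)^(j+1) * (m.choose (j+1)) * f (y+(j+1)) := by
    rw [Finset.sum_range_succ]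
    simp [Nat.choose_succ_self]
  rw [h2]
  have h3 : ∑ j ∈ range (m+1), (-1:ℝ)^(j+1) * (m.choose j) * f (y+(j+1))
      = - ∑ k ∈ range (m+1), (-1:ℝ)^k * (m.choose k) * f (y+1+k) := by
    rw [← Finset.sum_neg_distrib]
    refine Finset.sum_congr rfl fun j hj => ?_
    rw [show y + (j+1) = y + 1 + j from by ring]
    ring
  rw [h3]
  simp only [Nat.choose_zero_right, Nat.add_zero]
  ring

lemma TS1 (m : ℕ) : ∀ y : ℕ,
    ∑ k ∈ range (m+1), (-1:ℝ)^k * (m.choose k) * (1/(((y+k : ℕ):ℝ)+1)) = T y m := by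
  induction m with
  | zero => intro y; simp [T_zero]
  | succ m ih =>
    intro y
    rw [pascal_sum (fun t => 1/((t:ℝ)+1)) m y, ih y, ih (y+1), T_sub]

lemma TS2 (m : ℕ) : ∀ y : ℕ,
    ∑ k ∈ range (m+1), (-1:ℝ)^k * (m.choose k) * (1/(((y+k : ℕ):ℝ)+1)^2)
    = T y m * (H (y+m+1) - H y) := by
  induction m with
  | zero =>
    intro y
    simp only [range_one, sum_singleton, pow_zero, Nat.choose_zero_right, Nat.add_zero,
      Nat.cast_one, one_mul, Nat.zero_add]
    rw [show y + 0 + 1 = y + 1 from rfl, H_succ, T_zero]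
    have : ((y:ℝ)+1) ≠ 0 := by positivity
    field_simp
    ring
  | succ m ih =>
    intro y
    rw [pascal_sum (fun t => 1/((t:ℝ)+1)^2) m y, ih y, ih (y+1)]
    rw [show y + 1 + m + 1 = (y + m + 1) + 1 from by ring,
        show y + (m+1) + 1 = (y + m + 1) + 1 from by ring,
        H_succ (y+m+1), H_succ y, T_succ_left, T_succ_right]
    have h1 : ((y:ℝ)+1) ≠ 0 := by positivity
    have h2 : ((y:ℝ)+m+2) ≠ 0 := by positivity
    push_cast
    field_simp
    ring

lemma expand_pow (x : ℝ) (y m : ℕ) :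
    x^y * (1-x)^m = ∑ k ∈ range (m+1), (-1:ℝ)^k * (m.choose k) * x^(y+k) := by
  rw [sub_eq_add_neg, add_comm, add_pow, Finset.mul_sum]
  refine Finset.sum_congr rfl fun k hk => ?_
  rw [neg_pow, pow_add]; ring

lemma int_aux (c : ℝ) (j : ℕ) : ∫ x in (0:ℝ)..1, c * x^j = c * (1/((j:ℝ)+1)) := by
  rw [intervalIntegral.integral_const_mul, integral_pow]
  norm_num

lemma inner_eval (y m : ℕ) (p2 : ℝ) :
    (∫ p1 in (0:ℝ)..1, (p1*p2)^y * (1-p1*p2)^m)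
      = ∑ k ∈ range (m+1), ((-1:ℝ)^k * (m.choose k) * (1/(((y+k:ℕ):ℝ)+1))) * p2^(y+k) := by
  have key : ∀ p1 : ℝ, (p1*p2)^y * (1-p1*p2)^m
      = ∑ k ∈ range (m+1), ((-1:ℝ)^k * (m.choose k) * p2^(y+k)) * p1^(y+k) := by
    intro p1
    rw [expand_pow (p1*p2) y m]
    refine Finset.sum_congr rfl fun k hk => ?_
    rw [mul_pow]; ring
  rw [intervalIntegral.integral_congr (g := fun p1 => ∑ k ∈ range (m+1),
      ((-1:ℝ)^k * (m.choose k) * p2^(y+k)) * p1^(y+k)) (fun p1 _ => key p1)]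
  rw [intervalIntegral.integral_finset_sum (fun k _ =>
      (intervalIntegral.intervalIntegrable_pow (y+k)).const_mul _)]
  refine Finset.sum_congr rfl fun k hk => ?_
  rw [int_aux]
  push_cast
  ring

lemma denom_eval (y m : ℕ) :
    (∫ p2 in (0:ℝ)..1, ∫ p1 in (0:ℝ)..1, (p1*p2)^y * (1-p1*p2)^m)
      = ∑ k ∈ range (m+1), (-1:ℝ)^k * (m.choose k) * (1/((((y+k:ℕ):ℝ)+1)^2)) := by
  rw [intervalIntegral.integral_congr (g := fun p2 => ∑ k ∈ range (m+1),
      ((-1:ℝ)^k * (m.choose k) * (1/(((y+k:ℕ):ℝ)+1))) * p2^(y+k))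
      (fun p2 _ => inner_eval y m p2)]
  rw [intervalIntegral.integral_finset_sum (fun k _ =>
      (intervalIntegral.intervalIntegrable_pow (y+k)).const_mul _)]
  refine Finset.sum_congr rfl fun k hk => ?_
  rw [int_aux]
  have h1 : ((y:ℝ)+k+1) ≠ 0 := by positivity
  push_cast
  field_simp

lemma numer_eval (y m : ℕ) :
    (∫ p2 in (0:ℝ)..1, ∫ p1 in (0:ℝ)..1, p2 * (p1*p2)^y * (1-p1*p2)^m)
      = ∑ k ∈ range (m+1), (-1:ℝ)^k * (m.choose k)
          * (1/(((((y+k:ℕ):ℝ)+1)) * ((((y+k:ℕ):ℝ)+2)))) := by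
  have inner2 : ∀ p2 : ℝ, (∫ p1 in (0:ℝ)..1, p2 * (p1*p2)^y * (1-p1*p2)^m)
      = ∑ k ∈ range (m+1), ((-1:ℝ)^k * (m.choose k) * (1/(((y+k:ℕ):ℝ)+1))) * p2^(y+k+1) := by
    intro p2
    have hcomm : ∀ p1 : ℝ, p2 * (p1*p2)^y * (1-p1*p2)^m = p2 * ((p1*p2)^y * (1-p1*p2)^m) := by
      intro p1; ring
    rw [intervalIntegral.integral_congr (g := fun p1 => p2 * ((p1*p2)^y * (1-p1*p2)^m))
        (fun p1 _ => hcomm p1)]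
    rw [intervalIntegral.integral_const_mul, inner_eval y m p2, Finset.mul_sum]
    refine Finset.sum_congr rfl fun k hk => ?_
    rw [pow_succ]
    ring
  rw [intervalIntegral.integral_congr (g := fun p2 => ∑ k ∈ range (m+1),
      ((-1:ℝ)^k * (m.choose k) * (1/(((y+k:ℕ):ℝ)+1))) * p2^(y+k+1))
      (fun p2 _ => inner2 p2)]
  rw [intervalIntegral.integral_finset_sum (fun k _ =>
      (intervalIntegral.intervalIntegrable_pow (y+k+1)).const_mul _)]
  refine Finset.sum_congr rfl fun k hk => ?_
  rw [int_aux]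
  have h1 : ((y:ℝ)+k+1) ≠ 0 := by positivity
  have h2 : ((y:ℝ)+k+2) ≠ 0 := by positivity
  push_cast
  field_simp
  ring_nf

lemma H_diff (y n : ℕ) (hy : y ≤ n) :
    H (n+1) - H y = ∑ j ∈ Ico y (n+1), 1/((j:ℝ)+1) := by
  rw [Finset.sum_Ico_eq_sub _ (by omega : y ≤ n+1)]
  rfl

lemma H_diff_pos (y n : ℕ) (hy : y ≤ n) : 0 < H (n+1) - H y := by
  rw [H_diff y n hy]
  refine Finset.sum_pos (fun j _ => by positivity) ⟨y, Finset.mem_Ico.mpr ⟨le_refl y, by omega⟩⟩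

lemma Icc_inv_sum (y n : ℕ) (hy : y ≤ n) :
    ∑ i ∈ Icc (y+1) (n+1), ((i:ℝ))⁻¹ = H (n+1) - H y := by
  rw [H_diff y n hy, ← Finset.Ico_add_one_right_eq_Icc,
      Finset.sum_Ico_eq_sum_range (fun i => ((i:ℕ):ℝ)⁻¹) (y+1) (n+1+1),
      Finset.sum_Ico_eq_sum_range (fun j => 1/((j:ℝ)+1)) y (n+1)]
  rw [show n + 1 + 1 - (y+1) = n + 1 - y from by omega]
  refine Finset.sum_congr rfl fun k hk => ?_
  push_cast
  rw [one_div]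
  ring_nf

theorem posterior_expectation (n y : ℕ) (hn : 0 < n) (hy : y ≤ n) :
    (∫ p2 in (0:ℝ)..1, ∫ p1 in (0:ℝ)..1,
          p2 * (p1 * p2) ^ y * (1 - p1 * p2) ^ (n - y)) /
        (∫ p2 in (0:ℝ)..1, ∫ p1 in (0:ℝ)..1,
          (p1 * p2) ^ y * (1 - p1 * p2) ^ (n - y))
      = ((n : ℝ) - y + 1) / (((n : ℝ) + 2) * (H (n + 1) - H y)) ∧
    ((n : ℝ) - y + 1) / (((n : ℝ) + 2) * (H (n + 1) - H y))
      = harmonicMean (Finset.Icc (y + 1) (n + 1)) (fun i => (i : ℝ)) / ((n : ℝ) + 2) := by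
  set m := n - y with hm
  have hym : y + m = n := by omega
  have hmr : (m:ℝ) = (n:ℝ) - y := by
    rw [hm, Nat.cast_sub hy]
  have hHd : 0 < H (n+1) - H y := H_diff_pos y n hy
  have hHd' : H (n+1) - H y ≠ 0 := ne_of_gt hHd
  have hT : T y m ≠ 0 := ne_of_gt (T_pos y m)
  have hn2 : ((n:ℝ)+2) ≠ 0 := by positivity
  constructor
  · -- first part
    have hD : (∫ p2 in (0:ℝ)..1, ∫ p1 in (0:ℝ)..1,
          (p1 * p2) ^ y * (1 - p1 * p2) ^ (n - y))
        = T y m * (H (n+1) - H y) := by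
      rw [denom_eval y m, TS2 m y, show y + m + 1 = n + 1 from by omega]
    have hN : (∫ p2 in (0:ℝ)..1, ∫ p1 in (0:ℝ)..1,
          p2 * (p1 * p2) ^ y * (1 - p1 * p2) ^ (n - y))
        = T y m * (((n:ℝ) - y + 1) / ((n:ℝ) + 2)) := by
      rw [numer_eval y m]
      have hsplit : ∀ k ∈ range (m+1), (-1:ℝ)^k * (m.choose k)
            * (1/(((((y+k:ℕ):ℝ)+1)) * ((((y+k:ℕ):ℝ)+2))))
          = (-1:ℝ)^k * (m.choose k) * (1/(((y+k:ℕ):ℝ)+1))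
            - (-1:ℝ)^k * (m.choose k) * (1/((((y+1)+k:ℕ):ℝ)+1)) := by
        intro k _
        have h1 : (((y+k:ℕ):ℝ)+1) ≠ 0 := by positivity
        have h2 : (((y+k:ℕ):ℝ)+2) ≠ 0 := by positivity
        rw [show (((y+1)+k:ℕ):ℝ) = ((y+k:ℕ):ℝ) + 1 from by push_cast; ring]
        field_simp
        ring
      rw [Finset.sum_congr rfl hsplit, Finset.sum_sub_distrib, TS1 m y, TS1 m (y+1), T_sub,
          T_succ_right]
      rw [show ((y:ℝ)+m+2) = (n:ℝ)+2 from by rw [hmr]; ring,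
          show ((m:ℝ)+1) = (n:ℝ)-y+1 from by rw [hmr]]
      ring
    rw [hN, hD]
    rw [mul_div_mul_left _ _ hT, div_div]
  · -- second part
    unfold harmonicMean
    rw [Nat.card_Icc, Icc_inv_sum y n hy]
    rw [show n + 1 + 1 - (y+1) = n + 1 - y from by omega]
    have hc : ((n + 1 - y : ℕ):ℝ) = (n:ℝ) - y + 1 := by
      rw [Nat.cast_sub (by omega)]
      push_cast
      ring
    rw [hc]
    have hpos : (0:ℝ) < (n:ℝ) - y + 1 := by
      have : (y:ℝ) ≤ n := by exact_mod_cast hy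
      linarith
    rw [mul_inv, inv_inv]
    field_simp
end

section
/- Fix x ∈ (0,1). With p_n(y) = (H_{n+1} - H_y)/(n+1) denoting the marginal probability mass function of Y for sample size n, one has lim_{n→∞} Σ_{y=0}^{⌊nx⌋} p_n(y) = x(1 - ln x). That is, Y/n converges in distribution to the law on (0,1) with density f(w) = -ln(w). -/
open Filter Real

lemma H_eq (m : ℕ) : H m = (harmonic m : ℝ) := by
  simp [H, harmonic, one_div]

lemma sum_H (k : ℕ) : ∑ y ∈ Finset.range k, H y = k * H k - k := by
  induction k with
  | zero => simp [H]
  | succ k ih =>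
    rw [Finset.sum_range_succ, ih]
    have h : H (k+1) = H k + 1/((k:ℝ)+1) := by
      simp [H, Finset.sum_range_succ]
    rw [h]
    push_cast
    field_simp
    ring

theorem cdf_limit (x : ℝ) (hx : x ∈ Set.Ioo (0:ℝ) 1) :
    Filter.Tendsto
      (fun n : ℕ =>
        ∑ y ∈ Finset.range (⌊(n : ℝ) * x⌋₊ + 1), (H (n + 1) - H y) / ((n : ℝ) + 1))
      Filter.atTop (nhds (x * (1 - Real.log x))) := by
  obtain ⟨hx0, hx1⟩ := hx
  set a : ℕ → ℝ := fun n => ((⌊(n : ℝ) * x⌋₊ : ℝ) + 1) / ((n : ℝ) + 1) with ha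
  have key : ∀ n : ℕ,
      ∑ y ∈ Finset.range (⌊(n : ℝ) * x⌋₊ + 1), (H (n + 1) - H y) / ((n : ℝ) + 1)
      = a n * (H (n + 1) - H (⌊(n : ℝ) * x⌋₊ + 1) + 1) := by
    intro n
    rw [← Finset.sum_div, Finset.sum_sub_distrib, sum_H, Finset.sum_const,
      Finset.card_range]
    simp only [ha, nsmul_eq_mul]
    have hn1 : ((n : ℝ) + 1) ≠ 0 := by positivity
    push_cast
    field_simp
    ring
  simp only [key]
  -- limit of a
  have hfloor : Tendsto (fun n : ℕ => ⌊(n : ℝ) * x⌋₊) atTop atTop := by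
    apply tendsto_nat_floor_atTop.comp
    exact Tendsto.atTop_mul_const hx0 tendsto_natCast_atTop_atTop
  have hinv : Tendsto (fun n : ℕ => 1 / ((n : ℝ) + 1)) atTop (nhds 0) :=
    tendsto_one_div_add_atTop_nhds_zero_nat
  have ha_lim : Tendsto a atTop (nhds x) := by
    apply tendsto_of_tendsto_of_tendsto_of_le_of_le
      (g := fun n : ℕ => x - x * (1 / ((n : ℝ) + 1)))
      (h := fun n : ℕ => x + (1 - x) * (1 / ((n : ℝ) + 1)))
    · have := (tendsto_const_nhds (x := x) (f := atTop (α := ℕ))).sub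
        (hinv.const_mul x)
      simpa using this
    · have := (tendsto_const_nhds (x := x) (f := atTop (α := ℕ))).add
        (hinv.const_mul (1 - x))
      simpa using this
    · intro n
      have hn1 : (0:ℝ) < (n : ℝ) + 1 := by positivity
      have h1 : (n : ℝ) * x ≤ (⌊(n : ℝ) * x⌋₊ : ℝ) + 1 :=
        (Nat.lt_floor_add_one _).le
      calc x - x * (1 / ((n:ℝ)+1)) = (n:ℝ) * x / ((n:ℝ)+1) := by
            field_simp; ring
        _ ≤ a n := by simp only [ha]; gcongr
    · intro n
      have hn1 : (0:ℝ) < (n : ℝ) + 1 := by positivity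
      have h2 : (⌊(n : ℝ) * x⌋₊ : ℝ) ≤ (n : ℝ) * x :=
        Nat.floor_le (by positivity)
      calc a n ≤ ((n:ℝ) * x + 1) / ((n:ℝ)+1) := by simp only [ha]; gcongr
        _ = x + (1 - x) * (1 / ((n:ℝ)+1)) := by field_simp; ring
  -- limit of the second factor
  have hE : Tendsto (fun k : ℕ => H k - Real.log k) atTop
      (nhds eulerMascheroniConstant) := by
    simpa [H_eq] using Real.tendsto_harmonic_sub_log
  have hE1 : Tendsto (fun n : ℕ => H (n+1) - Real.log ((n:ℝ)+1)) atTop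
      (nhds eulerMascheroniConstant) := by
    have := hE.comp (tendsto_add_atTop_nat 1)
    simp only [Function.comp_def] at this
    push_cast at this
    exact this
  have hE2 : Tendsto (fun n : ℕ => H (⌊(n:ℝ)*x⌋₊+1) -
      Real.log ((⌊(n:ℝ)*x⌋₊:ℝ)+1)) atTop (nhds eulerMascheroniConstant) := by
    have := hE.comp ((tendsto_add_atTop_nat 1).comp hfloor)
    simp only [Function.comp_def] at this
    push_cast at this
    exact this
  have hlog : Tendsto (fun n : ℕ => Real.log (a n)) atTop (nhds (Real.log x)) :=
    ((Real.continuousAt_log hx0.ne').tendsto).comp ha_lim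
  have hb : Tendsto (fun n : ℕ => H (n + 1) - H (⌊(n : ℝ) * x⌋₊ + 1) + 1) atTop
      (nhds (1 - Real.log x)) := by
    have h := (((hE1.sub hE2).sub hlog).add_const 1)
    have heq : (fun n : ℕ => (H (n+1) - Real.log ((n:ℝ)+1) -
        (H (⌊(n:ℝ)*x⌋₊+1) - Real.log ((⌊(n:ℝ)*x⌋₊:ℝ)+1)) - Real.log (a n)) + 1)
        = fun n : ℕ => H (n + 1) - H (⌊(n : ℝ) * x⌋₊ + 1) + 1 := by
      funext n
      have hm1 : (0:ℝ) < (⌊(n:ℝ)*x⌋₊:ℝ)+1 := by positivity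
      have hn1 : (0:ℝ) < (n:ℝ)+1 := by positivity
      rw [ha]
      rw [Real.log_div hm1.ne' hn1.ne']
      ring
    rw [heq] at h
    convert h using 2
    ring
  have := ha_lim.mul hb
  exact this
end
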